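/- Let n and k be nonnegative integers with n > k. Then, as rational numbers, Σ_{i ≥ 0} C(n, 2i+1)·i^k divided by 2^{n−1−2k}·k! (where the exponent n−1−2k is an integer, possibly negative) is congruent modulo 4 in ℤ_(2) to C(n−1−k, k) + 2·C(n−1−k, k−2) if n−1 and k are both even, and to C(n−1−k, k) otherwise; here C(a, b) = 0 when b < 0. -/

import Mathlib

/-- `Σ_{i ≥ 0} C(n, 2i+1)·i^k` (a finite sum of natural numbers). -/
def oddSum (n k : ℕ) : ℕ := ∑ i ∈ Finset.range (n + 1), Nat.choose n (2 * i + 1) * i ^ k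

/-- Congruence mod 4 in `ℤ_(2)`:  `ν(r − s) ≥ 2`, with `ν(0) = ∞` (i.e. `r = s` allowed). -/
def cong4 (r s : ℚ) : Prop := r = s ∨ 2 ≤ padicValRat 2 (r - s)

open Finset

/-- surjection counts: `srj k j = j! * S(k,j)` -/
def srj : ℕ → ℕ → ℕ
  | 0, 0 => 1
  | 0, _+1 => 0
  | _+1, 0 => 0
  | k+1, j+1 => (j+1) * (srj k (j+1) + srj k j)

@[simp] lemma srj_zero_succ (j : ℕ) : srj 0 (j+1) = 0 := rfl
@[simp] lemma srj_succ_zero (k : ℕ) : srj (k+1) 0 = 0 := rfl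
@[simp] lemma srj_zero_zero : srj 0 0 = 1 := rfl
lemma srj_succ_succ (k j : ℕ) : srj (k+1) (j+1) = (j+1) * (srj k (j+1) + srj k j) := rfl

lemma srj_eq_zero_of_lt : ∀ {k j : ℕ}, k < j → srj k j = 0 := by
  intro k
  induction k with
  | zero => intro j hj; cases j with | zero => omega | succ j => rfl
  | succ k ih =>
    intro j hj
    cases j with
    | zero => omega
    | succ j =>
      rw [srj_succ_succ, ih (by omega), ih (by omega)]
      simp

lemma srj_diag (k : ℕ) : srj k k = k.factorial := by
  induction k with
  | zero => rfl
  | succ k ih =>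
    rw [srj_succ_succ, ih, srj_eq_zero_of_lt (by omega)]
    simp [Nat.factorial_succ, Nat.mul_comm]

lemma two_mul_srj_sub_one (k : ℕ) : 2 * srj (k+1) k = (k+1) * k * k.factorial := by
  induction k with
  | zero => rfl
  | succ k ih =>
    rw [srj_succ_succ, srj_diag]
    calc 2 * ((k+1) * ((k+1).factorial + srj (k+1) k))
        = 2*(k+1)*(k+1).factorial + (k+1)*(2 * srj (k+1) k) := by ring
      _ = 2*(k+1)*(k+1).factorial + (k+1)*((k+1) * k * k.factorial) := by rw [ih]
      _ = (k + 1 + 1) * (k + 1) * (k+1).factorial := by rw [Nat.factorial_succ]; ring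

lemma choose_mul_eq (i j : ℕ) :
    i * i.choose j = j * i.choose j + (j+1) * i.choose (j+1) := by
  rcases le_or_gt j i with hji | hji
  · have h1 : i.choose (j+1) * (j+1) = i.choose j * (i - j) := Nat.choose_succ_right_eq i j
    have h2 : j + (i - j) = i := by omega
    calc i * i.choose j = (j + (i - j)) * i.choose j := by rw [h2]
    _ = j * i.choose j + i.choose j * (i-j) := by ring
    _ = j * i.choose j + (j+1) * i.choose (j+1) := by rw [← h1]; ring
  · rw [Nat.choose_eq_zero_of_lt hji, Nat.choose_eq_zero_of_lt (by omega)]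
    simp

/-- `i^k = Σ_j srj k j * C(i,j)` -/
lemma pow_eq_sum_srj (k i : ℕ) :
    i ^ k = ∑ j ∈ range (k+1), srj k j * i.choose j := by
  induction k with
  | zero => simp
  | succ k ih =>
    have : i ^ (k+1) = ∑ j ∈ range (k+1), srj k j * (i * i.choose j) := by
      rw [pow_succ, ih, Finset.sum_mul]
      apply Finset.sum_congr rfl; intro j _; ring
    rw [this]
    have expand : ∀ j, srj k j * (i * i.choose j)
        = srj k j * (j * i.choose j) + srj k j * ((j+1) * i.choose (j+1)) := by
      intro j; rw [choose_mul_eq]; ring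
    simp_rw [expand]
    rw [Finset.sum_add_distrib]
    -- second sum: shift index
    have shift : ∑ j ∈ range (k+1), srj k j * ((j+1) * i.choose (j+1))
        = ∑ j ∈ range (k+2), (if j = 0 then 0 else srj k (j-1) * (j * i.choose j)) := by
      rw [Finset.sum_range_succ' (fun j => if j = 0 then 0 else srj k (j-1) * (j * i.choose j)) (k+1)]
      simp
    rw [shift]
    -- first sum: extend to range (k+2)
    have ext : ∑ j ∈ range (k+1), srj k j * (j * i.choose j)
        = ∑ j ∈ range (k+2), srj k j * (j * i.choose j) := by
      rw [Finset.sum_range_succ _ (k+1), srj_eq_zero_of_lt (Nat.lt_succ_self k)]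
      simp
    rw [ext, ← Finset.sum_add_distrib]
    apply Finset.sum_congr rfl
    intro j hj
    cases j with
    | zero => simp
    | succ j =>
      simp only [Nat.succ_ne_zero, if_false, Nat.add_sub_cancel]
      rw [srj_succ_succ]
      ring

lemma srj_conv (k j : ℕ) :
    srj k (j+1) = ∑ m ∈ range k, k.choose (m+1) * srj (k-(m+1)) j := by
  induction k generalizing j with
  | zero => simp
  | succ k ih =>
    -- RHS = Σ_{m∈range(k+1)} (C(k,m+1)+C(k,m)) * srj (k-m) j
    have pascal : ∀ m, (k+1).choose (m+1) = k.choose (m+1) + k.choose m := by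
      intro m; rw [Nat.choose_succ_succ']; omega
    have split : ∑ m ∈ range (k+1), (k+1).choose (m+1) * srj (k+1-(m+1)) j
        = (∑ m ∈ range (k+1), k.choose (m+1) * srj (k-m) j)
          + ∑ m ∈ range (k+1), k.choose m * srj (k-m) j := by
      rw [← Finset.sum_add_distrib]
      apply Finset.sum_congr rfl
      intro m _
      have : k + 1 - (m+1) = k - m := by omega
      rw [this, pascal]
      ring
    rw [split]
    -- second sum = srj k j + srj k (j+1)
    have second : ∑ m ∈ range (k+1), k.choose m * srj (k-m) j
        = srj k j + srj k (j+1) := by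
      rw [Finset.sum_range_succ' (fun m => k.choose m * srj (k-m) j) k]
      simp only [Nat.choose_zero_right, Nat.sub_zero, one_mul]
      rw [← ih j, Nat.add_comm]
    -- first sum = j * (srj k (j+1) + srj k j)
    have first : ∑ m ∈ range (k+1), k.choose (m+1) * srj (k-m) j
        = j * (srj k (j+1) + srj k j) := by
      rw [Finset.sum_range_succ]
      rw [Nat.choose_succ_self, zero_mul, add_zero]
      cases j with
      | zero =>
        simp only [Nat.zero_eq, zero_mul]
        apply Finset.sum_eq_zero
        intro m hm
        simp only [Finset.mem_range] at hm
        have : k - m = (k - (m+1)) + 1 := by omega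
        rw [this]
        rfl
      | succ j =>
        have expand : ∀ m ∈ range k, k.choose (m+1) * srj (k-m) (j+1)
            = (j+1) * (k.choose (m+1) * srj (k-(m+1)) (j+1))
              + (j+1) * (k.choose (m+1) * srj (k-(m+1)) j) := by
          intro m hm
          simp only [Finset.mem_range] at hm
          have h1 : k - m = (k - (m+1)) + 1 := by omega
          rw [h1, srj_succ_succ]
          ring
        rw [Finset.sum_congr rfl expand, Finset.sum_add_distrib,
            ← Finset.mul_sum, ← Finset.mul_sum, ← ih (j+1), ← ih j]
        ring
    rw [first, second, srj_succ_succ]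
    ring

def cOdd (n j : ℕ) : ℕ := ∑ i ∈ range (n+1), n.choose (2*i+1) * i.choose j
def cEven (n j : ℕ) : ℕ := ∑ i ∈ range (n+1), n.choose (2*i) * i.choose j

lemma cOdd_ext (n j : ℕ) : cOdd n j = ∑ i ∈ range (n+2), n.choose (2*i+1) * i.choose j := by
  rw [Finset.sum_range_succ _ (n+1), Nat.choose_eq_zero_of_lt (by omega)]
  simp [cOdd]

lemma cEven_ext (n j : ℕ) : cEven n j = ∑ i ∈ range (n+2), n.choose (2*i) * i.choose j := by
  rw [Finset.sum_range_succ _ (n+1), Nat.choose_eq_zero_of_lt (by omega)]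
  simp [cEven]

lemma cOdd_succ (n j : ℕ) : cOdd (n+1) j = cOdd n j + cEven n j := by
  rw [cOdd_ext n j, cEven_ext n j, ← Finset.sum_add_distrib]
  apply Finset.sum_congr rfl
  intro i _
  have : (n+1).choose (2*i+1) = n.choose (2*i) + n.choose (2*i+1) := Nat.choose_succ_succ n (2*i)
  rw [this]; ring

lemma cEven_succ (n j : ℕ) :
    cEven (n+1) j = cEven n j + cOdd n j + (if j = 0 then 0 else cOdd n (j-1)) := by
  have peel : cEven (n+1) j
      = (∑ i ∈ range (n+1), (n+1).choose (2*(i+1)) * (i+1).choose j) + (0:ℕ).choose j := by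
    rw [cEven, Finset.sum_range_succ' (fun i => (n+1).choose (2*i) * i.choose j) (n+1)]
    simp
  have pascal2 : ∀ i : ℕ, (n+1).choose (2*(i+1)) = n.choose (2*i+1) + n.choose (2*i+2) := by
    intro i
    have : 2*(i+1) = (2*i+1) + 1 := by ring
    rw [this, Nat.choose_succ_succ]
  have step1 : ∑ i ∈ range (n+1), (n+1).choose (2*(i+1)) * (i+1).choose j
      = (∑ i ∈ range (n+1), n.choose (2*i+1) * (i+1).choose j)
        + ∑ i ∈ range (n+1), n.choose (2*(i+1)) * (i+1).choose j := by
    rw [← Finset.sum_add_distrib]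
    apply Finset.sum_congr rfl
    intro i _
    rw [pascal2]
    have : 2*(i+1) = 2*i+2 := by ring
    rw [this]; ring
  -- the second sum plus the i=0 term is cEven n j
  have step2 : (∑ i ∈ range (n+1), n.choose (2*(i+1)) * (i+1).choose j) + n.choose 0 * (0:ℕ).choose j
      = cEven n j := by
    rw [cEven_ext, Finset.sum_range_succ' (fun i => n.choose (2*i) * i.choose j) (n+1)]
  -- the first sum
  have step3 : ∑ i ∈ range (n+1), n.choose (2*i+1) * (i+1).choose j
      = cOdd n j + (if j = 0 then 0 else cOdd n (j-1)) := by
    cases j with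
    | zero =>
      simp only [Nat.choose_zero_right, if_pos rfl, Nat.add_zero, Nat.mul_one]
      rw [cOdd]
      apply Finset.sum_congr rfl
      intro i _; simp
    | succ j =>
      simp only [Nat.succ_ne_zero, if_false, Nat.add_sub_cancel]
      rw [cOdd, cOdd, ← Finset.sum_add_distrib]
      apply Finset.sum_congr rfl
      intro i _
      rw [Nat.choose_succ_succ i j]
      ring
  rw [peel, step1, step3]
  have : (0:ℕ).choose j = n.choose 0 * (0:ℕ).choose j := by simp
  rw [this]
  omega

/-- truncated Pascal -/
lemma pascalTrunc (n j : ℕ) (hn : 1 ≤ n) (hbad : ¬(n = 1 ∧ j = 1)) :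
    Nat.choose (n-j) j = Nat.choose (n-1-j) j + (if j = 0 then 0 else Nat.choose (n-1-j) (j-1)) := by
  cases j with
  | zero => simp
  | succ j =>
    simp only [Nat.succ_ne_zero, if_false, Nat.add_sub_cancel]
    rcases le_or_gt (j+2) n with hle | hlt
    · have h1 : n - (j+1) = (n-1-(j+1)) + 1 := by omega
      rw [h1, Nat.choose_succ_succ]
      simp only [Nat.succ_eq_add_one]
      omega
    · have h1 : n - (j+1) = 0 := by omega
      have h2 : n - 1 - (j+1) = 0 := by omega
      rw [h1, h2]
      have hj1 : j ≠ 0 := by omega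
      have e1 : Nat.choose 0 (j+1) = 0 := Nat.choose_eq_zero_of_lt (by omega)
      have e2 : Nat.choose 0 j = 0 := Nat.choose_eq_zero_of_lt (by omega)
      omega

lemma cOdd_cEven_formula (n : ℕ) (hn : 1 ≤ n) :
    (∀ j, 2^(2*j+1) * cOdd n j = 2^n * Nat.choose (n-1-j) j) ∧
    (∀ j, ¬(n = 1 ∧ j = 1) →
      2^(2*j+1) * cEven n j
        = 2^n * (Nat.choose (n-1-j) j + 2 * (if j = 0 then 0 else Nat.choose (n-1-j) (j-1)))) := by
  induction n with
  | zero => omega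
  | succ n ih =>
    rcases Nat.eq_or_lt_of_le hn with h1 | h1
    · -- n + 1 = 1, i.e. n = 0 : base case
      have hn0 : n = 0 := by omega
      subst hn0
      constructor
      · intro j
        have h13 : Nat.choose 1 3 = 0 := by decide
        have : cOdd 1 j = (0:ℕ).choose j := by
          simp [cOdd, Finset.sum_range_succ, h13]
        rw [this]
        cases j with
        | zero => simp
        | succ j => simp [Nat.choose_eq_zero_of_lt (Nat.succ_pos j)]
      · intro j hbad
        have : cEven 1 j = (0:ℕ).choose j := by
          simp [cEven, Finset.sum_range_succ, Nat.choose_eq_zero_of_lt (show (1:ℕ) < 2 by omega)]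
        rw [this]
        cases j with
        | zero => simp
        | succ j =>
          have hj : 1 ≤ j := by omega
          simp only [Nat.choose_eq_zero_of_lt (Nat.succ_pos j), Nat.succ_ne_zero, if_false,
            Nat.add_sub_cancel]
          have e1 : Nat.choose (0+1-1-(j+1)) (j+1) = 0 := Nat.choose_eq_zero_of_lt (by omega)
          have e2 : Nat.choose (0+1-1-(j+1)) j = 0 := Nat.choose_eq_zero_of_lt (by omega)
          rw [e1, e2]
          ring
    · -- inductive step, n ≥ 1
      have hn1 : 1 ≤ n := by omega
      obtain ⟨IHA, IHB⟩ := ih hn1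
      have keyA : ∀ j, 2^(2*j+1) * cOdd (n+1) j = 2^(n+1) * Nat.choose (n-j) j := by
        intro j
        by_cases hbad : n = 1 ∧ j = 1
        · obtain ⟨hn2, hj2⟩ := hbad
          subst hn2; subst hj2
          have : cOdd 2 1 = 0 := by decide +kernel
          rw [this]
          simp
        · rw [cOdd_succ, Nat.mul_add, IHA j, IHB j hbad, ← Nat.mul_add,
              pascalTrunc n j hn1 hbad]
          ring
      constructor
      · intro j
        have h2 : n + 1 - 1 - j = n - j := by omega
        rw [h2]
        exact keyA j
      · intro j _
        by_cases hbad : n = 1 ∧ j = 1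
        · obtain ⟨hn2, hj2⟩ := hbad
          subst hn2; subst hj2
          have : cEven 2 1 = 1 := by decide +kernel
          rw [this]
          norm_num
        · have h2 : n + 1 - 1 - j = n - j := by omega
          rw [h2]
          cases j with
          | zero =>
            have hA := IHA 0
            have hB := IHB 0 (by simp)
            rw [cEven_succ]
            simp only [reduceIte, Nat.choose_zero_right, Nat.add_zero, Nat.mul_zero,
              Nat.mul_one, pow_one, Nat.mul_add, pow_succ] at hA hB ⊢
            omega
          | succ j =>
            rw [cEven_succ]
            simp only [Nat.succ_ne_zero, if_false, Nat.add_sub_cancel]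
            rw [Nat.mul_add, Nat.mul_add, IHA (j+1), IHB (j+1) hbad]
            simp only [Nat.succ_ne_zero, if_false, Nat.add_sub_cancel]
            have hsplit : 2^(2*(j+1)+1) * cOdd n j = 4 * (2^(2*j+1) * cOdd n j) := by ring
            rw [hsplit, IHA j]
            have h3 : n - 1 - j = n - (j+1) := by omega
            rw [h3]
            have h4 : Nat.choose (n-(j+1)) (j+1)
                = Nat.choose (n-1-(j+1)) (j+1) + Nat.choose (n-1-(j+1)) j := by
              have := pascalTrunc n (j+1) hn1 hbad
              simpa using this
            rw [h4, pow_succ]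
            ring

/-- `x = 0` or `ν₂(x) ≥ t` -/
def Vge (t : ℤ) (x : ℚ) : Prop := x = 0 ∨ t ≤ padicValRat 2 x

lemma Vge_zero (t : ℤ) : Vge t 0 := Or.inl rfl

lemma Vge_mono {s t : ℤ} {x : ℚ} (h : s ≤ t) (hx : Vge t x) : Vge s x := by
  rcases hx with h0 | h1
  · exact Or.inl h0
  · exact Or.inr (le_trans h h1)

lemma Vge_add {t : ℤ} {x y : ℚ} (hx : Vge t x) (hy : Vge t y) : Vge t (x + y) := by
  rcases hx with rfl | hx
  · simpa using hy
  rcases hy with rfl | hy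
  · rw [add_zero]; exact Or.inr hx
  by_cases hxy : x + y = 0
  · exact Or.inl hxy
  · right
    calc t ≤ min (padicValRat 2 x) (padicValRat 2 y) := le_min hx hy
    _ ≤ padicValRat 2 (x + y) := padicValRat.min_le_padicValRat_add hxy

lemma Vge_sum {t : ℤ} {s : Finset ℕ} {f : ℕ → ℚ} (h : ∀ i ∈ s, Vge t (f i)) :
    Vge t (∑ i ∈ s, f i) := by
  classical
  induction s using Finset.induction with
  | empty => simpa using Vge_zero t
  | @insert a s' ha ih =>
    rw [Finset.sum_insert ha]
    exact Vge_add (h a (Finset.mem_insert_self a s')) (ih fun i hi => h i (Finset.mem_insert_of_mem hi))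

lemma Vge_mul {s t : ℤ} {x y : ℚ} (hx : Vge s x) (hy : Vge t y) : Vge (s + t) (x * y) := by
  rcases hx with rfl | hx
  · simpa using Vge_zero _
  rcases hy with rfl | hy
  · simpa using Vge_zero _
  by_cases hx0 : x = 0
  · exact Or.inl (by simp [hx0])
  by_cases hy0 : y = 0
  · exact Or.inl (by simp [hy0])
  right
  rw [padicValRat.mul hx0 hy0]
  exact add_le_add hx hy

lemma Vge_natCast (m : ℕ) : Vge 0 (m : ℚ) := by
  rcases Nat.eq_zero_or_pos m with rfl | hm
  · simpa using Vge_zero 0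
  · right
    rw [padicValRat.of_nat]
    positivity

lemma padicValNat_factorial_le_sub_one : ∀ m : ℕ, 1 ≤ m → padicValNat 2 m.factorial ≤ m - 1 := by
  intro m
  induction m using Nat.strong_induction_on with
  | _ m ih =>
    intro hm
    rcases Nat.lt_or_ge m 2 with h2 | h2
    · interval_cases m
      · simp [Nat.factorial]
    · rcases Nat.even_or_odd m with ⟨a, ha⟩ | ⟨a, ha⟩
      · have ha2 : m = 2 * a := by omega
        have h1a : 1 ≤ a := by omega
        have := padicValNat_factorial_mul (p := 2) a
        rw [← ha2] at this
        have hih := ih a (by omega) h1a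
        omega
      · have ha2 : m = 2 * a + 1 := by omega
        have h1a : 1 ≤ a := by omega
        have := padicValNat_factorial_mul_add (p := 2) a (show 1 < 2 by omega)
        have h2a := padicValNat_factorial_mul (p := 2) a
        rw [← ha2] at this
        have hih := ih a (by omega) h1a
        omega

lemma padicValRat_factorial_le (m : ℕ) (hm : 1 ≤ m) :
    -(m:ℤ) + 1 ≤ padicValRat 2 ((m.factorial : ℚ))⁻¹ := by
  rw [padicValRat.inv, padicValRat.of_nat]
  have h := padicValNat_factorial_le_sub_one m hm
  have h2 : (padicValNat 2 m.factorial : ℤ) ≤ (m:ℤ) - 1 := by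
    exact_mod_cast le_trans (Nat.cast_le.mpr h) (by omega : ((m-1:ℕ):ℤ) ≤ (m:ℤ)-1)
  omega

lemma Vge_four_pow_div_factorial (m : ℕ) :
    Vge m ((4:ℚ)^m / ((m+1).factorial : ℚ)) := by
  right
  rw [div_eq_mul_inv, padicValRat.mul (by positivity) (by positivity)]
  have h4 : (4:ℚ)^m = (2:ℚ)^(2*m) := by rw [pow_mul]; norm_num
  rw [h4]
  have hself : padicValRat 2 (2:ℚ) = 1 := by
    exact_mod_cast padicValRat.self (p := 2) (by norm_num)
  have hpow : padicValRat 2 ((2:ℚ)^(2*m)) = 2*m := by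
    rw [padicValRat.pow 2, hself]
    push_cast; ring
  rw [hpow]
  have := padicValRat_factorial_le (m+1) (by omega)
  push_cast at this ⊢
  omega

/-- The key 2-adic estimate : `ν(4^(k-j) * srj k j / k!) ≥ k - j`. -/
lemma key_valuation : ∀ j k : ℕ,
    Vge ((k:ℤ) - (j:ℤ)) ((4:ℚ)^(k-j) * (srj k j : ℚ) / (k.factorial : ℚ)) := by
  intro j
  induction j with
  | zero =>
    intro k
    cases k with
    | zero => right; norm_num
    | succ k =>
      rw [srj_succ_zero]
      simpa using Vge_zero _
  | succ j ih =>
    intro k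
    rcases Nat.lt_or_ge k (j+1) with hk | hk
    · rw [srj_eq_zero_of_lt hk]
      simpa using Vge_zero _
    -- use convolution
    have hconv := srj_conv k j
    have expand : (4:ℚ)^(k-(j+1)) * (srj k (j+1) : ℚ) / (k.factorial : ℚ)
        = ∑ m ∈ range k, ((4:ℚ)^m / ((m+1).factorial : ℚ))
            * ((4:ℚ)^(k-(m+1)-j) * (srj (k-(m+1)) j : ℚ) / ((k-(m+1)).factorial : ℚ)) := by
      rw [hconv]
      push_cast
      rw [Finset.mul_sum, Finset.sum_div]
      apply Finset.sum_congr rfl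
      intro m hm
      simp only [Finset.mem_range] at hm
      rcases Nat.lt_or_ge (k-(m+1)) j with hlt | hge
      · rw [srj_eq_zero_of_lt hlt]
        push_cast
        simp
      · have hmk : m + 1 ≤ k := hm
        have hfact : ((k.choose (m+1) : ℚ)) * ((m+1).factorial : ℚ) * (((k-(m+1)).factorial : ℚ))
            = (k.factorial : ℚ) := by
          exact_mod_cast congrArg (Nat.cast (R := ℚ)) (Nat.choose_mul_factorial_mul_factorial hmk)
        have hexp : k - (j+1) = m + (k-(m+1)-j) := by omega
        rw [hexp, pow_add, ← hfact]
        have hC : ((k.choose (m+1) : ℚ)) ≠ 0 := by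
          have := Nat.choose_pos hmk
          positivity
        have hf1 : ((m+1).factorial : ℚ) ≠ 0 := by positivity
        have hf2 : (((k-(m+1)).factorial : ℚ)) ≠ 0 := by positivity
        field_simp
    rw [expand]
    apply Vge_sum
    intro m hm
    simp only [Finset.mem_range] at hm
    rcases Nat.lt_or_ge (k-(m+1)) j with hlt | hge
    · have hz : ((srj (k-(m+1)) j : ℕ) : ℚ) = 0 := by rw [srj_eq_zero_of_lt hlt]; simp
      rw [hz]
      simp only [mul_zero, zero_mul, zero_div, mul_zero]
      exact Vge_zero _
    · have h3 := Vge_mul (Vge_four_pow_div_factorial m) (ih (k-(m+1)))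
      apply Vge_mono _ h3
      omega

lemma cong4_of_Vge {r s : ℚ} (h : Vge 2 (r - s)) : cong4 r s := by
  rcases h with h0 | h1
  · exact Or.inl (sub_eq_zero.mp h0)
  · exact Or.inr h1

lemma Vge_intCast (z : ℤ) : Vge 0 (z : ℚ) := by
  rcases eq_or_ne z 0 with rfl | hz
  · simpa using Vge_zero 0
  · right
    rw [padicValRat.of_int]
    exact_mod_cast Int.natCast_nonneg _

lemma padicValRat_two_two : padicValRat 2 (2:ℚ) = 1 := by
  exact_mod_cast padicValRat.self (p := 2) (by norm_num)

lemma Vge_four : Vge 2 (4:ℚ) := by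
  right
  have h4 : (4:ℚ) = (2:ℚ)^(2:ℕ) := by norm_num
  rw [h4, padicValRat.pow 2, padicValRat_two_two]
  norm_num

lemma oddSum_eq (n k : ℕ) : oddSum n k = ∑ j ∈ range (k+1), srj k j * cOdd n j := by
  unfold oddSum cOdd
  simp_rw [pow_eq_sum_srj k, Finset.mul_sum]
  rw [Finset.sum_comm]
  apply Finset.sum_congr rfl; intro j _
  apply Finset.sum_congr rfl
  intro i _
  ring

lemma cOdd_eq_q (n j : ℕ) (hn : 1 ≤ n) :
    (cOdd n j : ℚ) = (2:ℚ)^((n:ℤ)-1-2*(j:ℤ)) * (Nat.choose (n-1-j) j : ℚ) := by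
  have h := (cOdd_cEven_formula n hn).1 j
  have hq : ((2:ℚ))^((2*j+1 : ℕ)) * (cOdd n j : ℚ)
      = (2:ℚ)^((n : ℕ)) * (Nat.choose (n-1-j) j : ℚ) := by
    exact_mod_cast congrArg (Nat.cast (R := ℚ)) h
  have hne : ((2:ℚ))^((2*j+1 : ℕ)) ≠ 0 := by positivity
  have hsplit : (2:ℚ)^((n:ℤ)-1-2*(j:ℤ)) = (2:ℚ)^((n:ℕ)) / (2:ℚ)^((2*j+1 : ℕ)) := by
    rw [← zpow_natCast (2:ℚ) n, ← zpow_natCast (2:ℚ) (2*j+1), ← zpow_sub₀ (by norm_num)]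
    congr 1
    push_cast
    ring
  rw [hsplit, div_mul_eq_mul_div, ← hq]
  field_simp

lemma Q_eq (n k : ℕ) (h : k < n) :
    (oddSum n k : ℚ) / ((2 : ℚ) ^ ((n : ℤ) - 1 - 2 * (k : ℤ)) * (k.factorial : ℚ))
      = ∑ j ∈ range (k+1),
          (4:ℚ)^(k-j) * (srj k j : ℚ) / (k.factorial : ℚ) * (Nat.choose (n-1-j) j : ℚ) := by
  have hn : 1 ≤ n := by omega
  rw [oddSum_eq]
  push_cast
  rw [Finset.sum_div]
  apply Finset.sum_congr rfl
  intro j hj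
  simp only [Finset.mem_range] at hj
  rw [cOdd_eq_q n j hn]
  have hj' : j ≤ k := by omega
  have hsplit : (2:ℚ)^((n:ℤ)-1-2*(j:ℤ)) = (2:ℚ)^((n:ℤ)-1-2*(k:ℤ)) * (4:ℚ)^(k-j) := by
    have h4 : (4:ℚ)^(k-j) = (2:ℚ)^((2*(k-j) : ℕ)) := by rw [pow_mul]; norm_num
    rw [h4, ← zpow_natCast (2:ℚ) (2*(k-j)), ← zpow_add₀ (by norm_num : (2:ℚ) ≠ 0)]
    congr 1
    omega
  rw [hsplit]
  have h1 : (2:ℚ)^((n:ℤ)-1-2*(k:ℤ)) ≠ 0 := zpow_ne_zero _ (by norm_num)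
  have h2 : (k.factorial : ℚ) ≠ 0 := by positivity
  field_simp

lemma t_sub_one (m : ℕ) :
    (4:ℚ)^(m+1-m) * (srj (m+1) m : ℚ) / ((m+1).factorial : ℚ) = 2*(m:ℚ) := by
  have h : ((2:ℚ)) * (srj (m+1) m : ℚ) = ((m:ℚ)+1)*(m:ℚ)*(m.factorial : ℚ) := by
    exact_mod_cast congrArg (Nat.cast (R := ℚ)) (two_mul_srj_sub_one m)
  have hs : m+1-m = 1 := by omega
  rw [hs, pow_one, Nat.factorial_succ]
  have hval : (srj (m+1) m : ℚ) = ((m:ℚ)+1)*(m:ℚ)*(m.factorial : ℚ)/2 := by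
    linear_combination h / 2
  rw [hval]
  have hf : (m.factorial : ℚ) ≠ 0 := by positivity
  have hm1 : ((m:ℚ)+1) ≠ 0 := by positivity
  push_cast
  field_simp
  ring

lemma choose_even_odd_mod_two (a b : ℕ) : Nat.choose (2*a) (2*b+1) % 2 = 0 := by
  haveI : Fact (Nat.Prime 2) := ⟨Nat.prime_two⟩
  have h := Choose.choose_modEq_choose_mod_mul_choose_div_nat (p := 2) (n := 2*a) (k := 2*b+1)
  unfold Nat.ModEq at h
  have e1 : (2*a) % 2 = 0 := by omega
  have e2 : (2*b+1) % 2 = 1 := by omega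
  have e3 : (2*a)/2 = a := by omega
  have e4 : (2*b+1)/2 = b := by omega
  rw [e1, e2, e3, e4] at h
  simpa using h

lemma choose_oo_ee_mod_two (a b : ℕ) :
    Nat.choose (2*a+1) (2*b+1) % 2 = Nat.choose (2*a) (2*b) % 2 := by
  haveI : Fact (Nat.Prime 2) := ⟨Nat.prime_two⟩
  have h1 := Choose.choose_modEq_choose_mod_mul_choose_div_nat (p := 2) (n := 2*a+1) (k := 2*b+1)
  have h2 := Choose.choose_modEq_choose_mod_mul_choose_div_nat (p := 2) (n := 2*a) (k := 2*b)
  unfold Nat.ModEq at h1 h2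
  have e1 : (2*a+1) % 2 = 1 := by omega
  have e2 : (2*b+1) % 2 = 1 := by omega
  have e3 : (2*a+1)/2 = a := by omega
  have e4 : (2*b+1)/2 = b := by omega
  have e5 : (2*a) % 2 = 0 := by omega
  have e6 : (2*b) % 2 = 0 := by omega
  have e7 : (2*a)/2 = a := by omega
  have e8 : (2*b)/2 = b := by omega
  rw [e1, e2, e3, e4] at h1
  rw [e5, e6, e7, e8] at h2
  simp only [Nat.choose_self, Nat.choose_zero_right, one_mul] at h1 h2
  omega

theorem stmt6 (n k : ℕ) (h : k < n) :
    cong4 ((oddSum n k : ℚ) / ((2 : ℚ) ^ ((n : ℤ) - 1 - 2 * (k : ℤ)) * (k.factorial : ℚ)))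
      ((Nat.choose (n - 1 - k) k : ℚ) +
        if Even (n - 1) ∧ Even k ∧ 2 ≤ k then 2 * (Nat.choose (n - 1 - k) (k - 2) : ℚ)
        else 0) := by
  apply cong4_of_Vge
  rw [Q_eq n k h]
  cases k with
  | zero =>
    rw [Finset.sum_range_one]
    have hcond : ¬(Even (n-1) ∧ Even 0 ∧ 2 ≤ 0) := by
      rintro ⟨-, -, h2⟩; omega
    rw [if_neg hcond]
    simp only [srj_zero_zero, Nat.sub_zero, pow_zero, Nat.factorial_zero, Nat.cast_one,
      Nat.choose_zero_right, add_zero]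
    norm_num
    exact Vge_zero 2
  | succ m =>
    rw [Finset.sum_range_succ]
    -- last term is the main binomial
    have hlast : (4:ℚ)^(m+1-(m+1)) * (srj (m+1) (m+1) : ℚ) / ((m+1).factorial : ℚ)
        * (Nat.choose (n-1-(m+1)) (m+1) : ℚ) = (Nat.choose (n-1-(m+1)) (m+1) : ℚ) := by
      rw [Nat.sub_self, pow_zero, srj_diag]
      have hf : ((m+1).factorial : ℚ) ≠ 0 := by positivity
      field_simp
    rw [hlast, Finset.sum_range_succ]
    have hrw : (∑ j ∈ range m,
          (4:ℚ)^(m+1-j) * (srj (m+1) j : ℚ) / ((m+1).factorial : ℚ) * (Nat.choose (n-1-j) j : ℚ))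
        + (4:ℚ)^(m+1-m) * (srj (m+1) m : ℚ) / ((m+1).factorial : ℚ) * (Nat.choose (n-1-m) m : ℚ)
        + (Nat.choose (n-1-(m+1)) (m+1) : ℚ)
        - ((Nat.choose (n-1-(m+1)) (m+1) : ℚ) +
            (if Even (n - 1) ∧ Even (m+1) ∧ 2 ≤ m+1 then
              2 * (Nat.choose (n-1-(m+1)) (m+1-2) : ℚ) else 0))
        = (∑ j ∈ range m,
            (4:ℚ)^(m+1-j) * (srj (m+1) j : ℚ) / ((m+1).factorial : ℚ) * (Nat.choose (n-1-j) j : ℚ))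
          + (2*(m:ℚ) * (Nat.choose (n-1-m) m : ℚ)
            - (if Even (n - 1) ∧ Even (m+1) ∧ 2 ≤ m+1 then
                2 * (Nat.choose (n-1-(m+1)) (m+1-2) : ℚ) else 0)) := by
      rw [t_sub_one m]
      ring
    rw [hrw]
    apply Vge_add
    · -- terms j ≤ m-1 have valuation ≥ 2
      apply Vge_sum
      intro j hj
      simp only [Finset.mem_range] at hj
      have hkey := key_valuation j (m+1)
      have hmul := Vge_mul hkey (Vge_natCast (Nat.choose (n-1-j) j))
      apply Vge_mono _ hmul
      omega
    · -- the (k-1)-term minus the correction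
      rcases Nat.even_or_odd m with ⟨a, ha⟩ | ⟨a, ha⟩
      · -- m even : k odd, correction vanishes, 2m ≡ 0 mod 4
        have hcond : ¬(Even (n-1) ∧ Even (m+1) ∧ 2 ≤ m+1) := by
          rintro ⟨-, he, -⟩
          rcases he with ⟨b, hb⟩
          omega
        rw [if_neg hcond, sub_zero]
        have h2m : 2*(m:ℚ) = 4*(a:ℚ) := by push_cast; rw [ha]; push_cast; ring
        rw [h2m, mul_assoc]
        have := Vge_mul Vge_four
          (Vge_mul (Vge_natCast a) (Vge_natCast (Nat.choose (n-1-m) m)))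
        simpa using Vge_mono (by omega) this
      · -- m odd : k = m+1 even, 2 ≤ k
        rcases Nat.even_or_odd n with ⟨c, hc⟩ | ⟨c, hc⟩
        · -- n even : n - 1 odd, correction vanishes; C(n-k, m) is even
          have hcond : ¬(Even (n-1) ∧ Even (m+1) ∧ 2 ≤ m+1) := by
            rintro ⟨he, -, -⟩
            rcases he with ⟨b, hb⟩
            omega
          rw [if_neg hcond, sub_zero]
          -- n-1-m = 2*(c-a-1), m = 2*a+1
          have hm : m = 2*a+1 := by omega
          have hnm : n-1-m = 2*(c-a-1) := by omega
          have heven := choose_even_odd_mod_two (c-a-1) a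
          rw [← hm, ← hnm] at heven
          obtain ⟨d, hd⟩ : ∃ d, Nat.choose (n-1-m) m = 2*d :=
            ⟨Nat.choose (n-1-m) m / 2, by omega⟩
          have hval : 2*(m:ℚ) * (Nat.choose (n-1-m) m : ℚ) = 4*((m*d : ℕ) : ℚ) := by
            rw [hd]; push_cast; ring
          rw [hval]
          exact Vge_mono (by omega) (Vge_mul Vge_four (Vge_natCast (m*d)))
        · -- n odd : the interesting case
          have hcond : Even (n-1) ∧ Even (m+1) ∧ 2 ≤ m+1 := by
            refine ⟨⟨c, by omega⟩, ⟨(m+1)/2, by omega⟩, by omega⟩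
          rw [if_pos hcond]
          -- u = m * C(n-1-m, m), v = C(n-1-(m+1), m-1); u ≡ v (mod 2)
          set u := m * Nat.choose (n-1-m) m with hu
          set v := Nat.choose (n-1-(m+1)) (m+1-2) with hv
          have hparity : u % 2 = v % 2 := by
            have hm : m = 2*(a)+1 := by omega
            have h1 : n-1-m = 2*(c-a-1)+1 := by omega
            have h2 : n-1-(m+1) = 2*(c-a-1) := by omega
            have h3 : m+1-2 = 2*a := by omega
            have hl := choose_oo_ee_mod_two (c-a-1) a
            rw [← h1, ← hm] at hl
            rw [hu, hv, h2, h3]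
            have hmod : m % 2 = 1 := by omega
            rw [Nat.mul_mod, hmod, one_mul]
            omega
          obtain ⟨s, hs⟩ : ∃ s : ℤ, (u:ℤ) - (v:ℤ) = 2*s := ⟨((u:ℤ)-v)/2, by omega⟩
          have hexpr : 2*(m:ℚ) * (Nat.choose (n-1-m) m : ℚ) - 2 * (Nat.choose (n-1-(m+1)) (m+1-2) : ℚ)
              = 4 * (s:ℚ) := by
            have : ((u:ℚ)) - ((v:ℚ)) = 2*(s:ℚ) := by exact_mod_cast congrArg (fun z : ℤ => (z : ℚ)) hs
            rw [hu, hv] at this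
            push_cast at this ⊢
            linarith [this]
          rw [hexpr]
          exact Vge_mono (by omega) (Vge_mul Vge_four (Vge_intCast s))
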